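/- Let X be a separable Hilbert space, A the generator of a strongly continuous semigroup e^{tA} on X, and Q ∈ L(X) self-adjoint nonnegative. Suppose Q_∞ x = ∫_0^∞ e^{sA} Q e^{sA*} x ds converges for all x ∈ X and defines a bounded operator mapping D(A*) into D(A). Then Q_∞ satisfies the Lyapunov equation Q_∞ A* x + A Q_∞ x = -Q x for every x ∈ D(A*). -/

import Mathlib

open MeasureTheory
open scoped RealInnerProductSpace

section AuxiliaryLemmas
open Filter Topology ContinuousLinearMap Set

lemma sg_bound {X : Type*} [NormedAddCommGroup X] [InnerProductSpace ℝ X]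
    [CompleteSpace X] (S : ℝ → X →L[ℝ] X)
    (hScont : ∀ x : X, Continuous fun t => S t x) :
    ∃ C : ℝ, 1 ≤ C ∧ ∀ t ∈ Set.Icc (0:ℝ) 2, ‖S t‖ ≤ C := by
  have h : ∀ x : X, ∃ C, ∀ i : (Set.Icc (0:ℝ) 2), ‖S i x‖ ≤ C := by
    intro x
    obtain ⟨C, hC⟩ := (isCompact_Icc (a := (0:ℝ)) (b := 2)).exists_bound_of_continuousOn
      ((hScont x).continuousOn (s := Set.Icc 0 2))
    exact ⟨C, fun i => hC i i.2⟩
  obtain ⟨C', hC'⟩ := banach_steinhaus h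
  exact ⟨max C' 1, le_max_right _ _, fun t ht => le_trans (hC' ⟨t, ht⟩) (le_max_left _ _)⟩

lemma norm_le_of_inner_le {X : Type*} [NormedAddCommGroup X] [InnerProductSpace ℝ X]
    (v : X) {c : ℝ} (hc : 0 ≤ c) (h : ∀ z : X, ⟪v, z⟫ ≤ c * ‖z‖) : ‖v‖ ≤ c := by
  have hv := h v
  rw [real_inner_self_eq_norm_sq] at hv
  nlinarith [norm_nonneg v]

set_option maxHeartbeats 1000000 in
lemma adjoint_cont {X : Type*} [NormedAddCommGroup X] [InnerProductSpace ℝ X]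
    [CompleteSpace X] (S : ℝ → X →L[ℝ] X) (hS0 : S 0 = 1)
    (hSsem : ∀ t s : ℝ, 0 ≤ t → 0 ≤ s → S (t + s) = (S t).comp (S s))
    (hScont : ∀ x : X, Continuous fun t => S t x) (x : X) :
    Tendsto (fun t => ContinuousLinearMap.adjoint (S t) x) (𝓝[≥] (0:ℝ)) (𝓝 x) := by
  obtain ⟨C, hC1, hC⟩ := sg_bound S hScont
  have hCadj : ∀ t ∈ Set.Icc (0:ℝ) 2, ‖ContinuousLinearMap.adjoint (S t)‖ ≤ C := fun t ht =>
    (ContinuousLinearMap.adjoint.norm_map (S t)) ▸ hC t ht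
  -- the subspace of vectors where the adjoint semigroup is strongly right continuous at 0
  set Y : Submodule ℝ X :=
    { carrier := {y | Tendsto (fun t => ContinuousLinearMap.adjoint (S t) y) (𝓝[≥] (0:ℝ)) (𝓝 y)}
      add_mem' := fun {a b} ha hb => by
        have := ha.add hb
        simpa [map_add] using this
      zero_mem' := by simpa [map_zero] using (tendsto_const_nhds :
        Tendsto (fun _ : ℝ => (0:X)) (𝓝[≥] (0:ℝ)) (𝓝 0))
      smul_mem' := fun c a ha => by
        have := ha.const_smul c
        simpa [_root_.map_smul] using this } with hYdef
  have hmemY : ∀ y : X, y ∈ Y ↔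
      Tendsto (fun t => ContinuousLinearMap.adjoint (S t) y) (𝓝[≥] (0:ℝ)) (𝓝 y) := fun y => Iff.rfl
  have hYc : IsClosed (Y : Set X) := by
    rw [← isSeqClosed_iff_isClosed]
    intro u y hu huy
    show Tendsto (fun t => ContinuousLinearMap.adjoint (S t) y) (𝓝[≥] (0:ℝ)) (𝓝 y)
    rw [Metric.tendsto_nhdsWithin_nhds]
    intro ε hε
    -- pick n with ‖u n - y‖ small
    have hcv := (Metric.tendsto_atTop.1 huy) (ε / (2 * (C + 1))) (by positivity)
    obtain ⟨n, hn⟩ := hcv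
    have hun : dist (u n) y < ε / (2 * (C + 1)) := hn n le_rfl
    have hu' : Tendsto (fun t => ContinuousLinearMap.adjoint (S t) (u n)) (𝓝[≥] (0:ℝ)) (𝓝 (u n)) := hu n
    rw [Metric.tendsto_nhdsWithin_nhds] at hu'
    obtain ⟨δ₁, hδ₁, hδ⟩ := hu' (ε / 2) (by positivity)
    refine ⟨min δ₁ 1, by positivity, ?_⟩
    intro t ht htd
    have ht0 : (0:ℝ) ≤ t := ht
    have ht2 : t ∈ Set.Icc (0:ℝ) 2 := by
      constructor
      · exact ht0
      · have : |t - 0| < 1 := lt_of_lt_of_le htd (min_le_right _ _)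
        rw [sub_zero, abs_of_nonneg ht0] at this
        linarith
    have h1 : dist (ContinuousLinearMap.adjoint (S t) (u n)) (u n) < ε / 2 :=
      hδ ht (lt_of_lt_of_le htd (min_le_left _ _))
    have h2 : ‖ContinuousLinearMap.adjoint (S t) y - ContinuousLinearMap.adjoint (S t) (u n)‖
        ≤ C * ‖y - u n‖ := by
      rw [← map_sub]
      calc ‖ContinuousLinearMap.adjoint (S t) (y - u n)‖
          ≤ ‖ContinuousLinearMap.adjoint (S t)‖ * ‖y - u n‖ := le_opNorm _ _
        _ ≤ C * ‖y - u n‖ := by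
            apply mul_le_mul_of_nonneg_right (hCadj t ht2) (norm_nonneg _)
    have key : dist (ContinuousLinearMap.adjoint (S t) y) y ≤
        ‖ContinuousLinearMap.adjoint (S t) y - ContinuousLinearMap.adjoint (S t) (u n)‖
        + dist (ContinuousLinearMap.adjoint (S t) (u n)) (u n) + ‖u n - y‖ := by
      rw [dist_eq_norm, dist_eq_norm]
      have : ContinuousLinearMap.adjoint (S t) y - y =
          (ContinuousLinearMap.adjoint (S t) y - ContinuousLinearMap.adjoint (S t) (u n))
          + (ContinuousLinearMap.adjoint (S t) (u n) - u n) + (u n - y) := by abel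
      rw [this]
      exact le_trans (norm_add_le _ _) (by gcongr; exact norm_add_le _ _)
    have hyu : ‖y - u n‖ < ε / (2 * (C + 1)) := by
      rw [← dist_eq_norm, dist_comm]; exact hun
    have hyu' : ‖u n - y‖ < ε / (2 * (C + 1)) := by rw [← dist_eq_norm]; exact hun
    have hC0 : (0:ℝ) < C := lt_of_lt_of_le one_pos hC1
    calc dist (ContinuousLinearMap.adjoint (S t) y) y
        ≤ C * ‖y - u n‖ + dist (ContinuousLinearMap.adjoint (S t) (u n)) (u n) + ‖u n - y‖ := by
          refine le_trans key ?_; gcongr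
      _ < C * (ε / (2 * (C + 1))) + ε / 2 + ε / (2 * (C + 1)) := by
          gcongr
      _ ≤ ε := by
          have : C * (ε / (2 * (C + 1))) + ε / (2 * (C + 1)) = ε / 2 := by
            field_simp
          linarith
  -- continuity and bounds of the scalar integrand
  have hfc : ∀ z : X, Continuous fun s : ℝ => ⟪x, S s z⟫ :=
    fun z => Continuous.inner continuous_const (hScont z)
  have hfI : ∀ (z : X) (a b : ℝ), IntervalIntegrable (fun s => ⟪x, S s z⟫) volume a b :=
    fun z a b => (hfc z).intervalIntegrable a b
  have hfb : ∀ z : X, ∀ s ∈ Set.Icc (0:ℝ) 2, ‖⟪x, S s z⟫‖ ≤ C * ‖x‖ * ‖z‖ := by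
    intro z s hs
    rw [Real.norm_eq_abs]
    calc |⟪x, S s z⟫| ≤ ‖x‖ * ‖S s z‖ := abs_real_inner_le_norm _ _
      _ ≤ ‖x‖ * (C * ‖z‖) := by
          refine mul_le_mul_of_nonneg_left ?_ (norm_nonneg x)
          calc ‖S s z‖ ≤ ‖S s‖ * ‖z‖ := le_opNorm _ _
            _ ≤ C * ‖z‖ := mul_le_mul_of_nonneg_right (hC s hs) (norm_nonneg _)
      _ = C * ‖x‖ * ‖z‖ := by ring
  -- construction of the averaged vectors
  have main : ∀ t : ℝ, ∃ y : X, t ∈ Set.Ioc (0:ℝ) 1 →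
      y ∈ Y ∧ ∀ z : X, ⟪y, z⟫ = t⁻¹ * ∫ s in (0:ℝ)..t, ⟪x, S s z⟫ := by
    intro t
    by_cases ht : t ∈ Set.Ioc (0:ℝ) 1
    swap
    · exact ⟨0, fun h => absurd h ht⟩
    obtain ⟨ht0, ht1⟩ := ht
    have hsub : ∀ a b : ℝ, 0 ≤ a → a ≤ 2 → 0 ≤ b → b ≤ 2 → Set.uIoc a b ⊆ Set.Icc (0:ℝ) 2 := by
      intro a b ha ha2 hb hb2 s hs
      rcases le_total a b with hab | hab
      · rw [Set.uIoc_of_le hab] at hs; exact ⟨le_trans ha (le_of_lt hs.1), le_trans hs.2 hb2⟩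
      · rw [Set.uIoc_of_ge hab] at hs
        exact ⟨le_trans hb (le_of_lt hs.1), le_trans hs.2 ha2⟩
    have hintb : ∀ (z : X) (a b : ℝ), 0 ≤ a → a ≤ 2 → 0 ≤ b → b ≤ 2 →
        ‖∫ s in a..b, ⟪x, S s z⟫‖ ≤ C * ‖x‖ * ‖z‖ * |b - a| := by
      intro z a b ha ha2 hb hb2
      exact intervalIntegral.norm_integral_le_of_norm_le_const
        (fun s hs => hfb z s (hsub a b ha ha2 hb hb2 hs))
    set φ : X →ₗ[ℝ] ℝ :=
      { toFun := fun z => t⁻¹ * ∫ s in (0:ℝ)..t, ⟪x, S s z⟫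
        map_add' := by
          intro z w
          rw [← mul_add, ← intervalIntegral.integral_add (hfI z 0 t) (hfI w 0 t)]
          congr 1
          apply intervalIntegral.integral_congr
          intro s _
          simp [inner_add_right]
        map_smul' := by
          intro c z
          simp only [RingHom.id_apply, smul_eq_mul]
          have he : (fun s => ⟪x, S s (c • z)⟫) = fun s => c * ⟪x, S s z⟫ := by
            funext s; rw [ContinuousLinearMap.map_smul, real_inner_smul_right]
          rw [he, intervalIntegral.integral_const_mul]
          ring } with hφdef
    have hφb : ∀ z : X, ‖φ z‖ ≤ (C * ‖x‖) * ‖z‖ := by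
      intro z
      have h1 : φ z = t⁻¹ * ∫ s in (0:ℝ)..t, ⟪x, S s z⟫ := rfl
      rw [h1, Real.norm_eq_abs, abs_mul, abs_of_nonneg (le_of_lt (inv_pos.2 ht0)),
        ← Real.norm_eq_abs]
      calc t⁻¹ * ‖∫ s in (0:ℝ)..t, ⟪x, S s z⟫‖
          ≤ t⁻¹ * (C * ‖x‖ * ‖z‖ * |t - 0|) := by
            refine mul_le_mul_of_nonneg_left ?_ (le_of_lt (inv_pos.2 ht0))
            exact hintb z 0 t le_rfl (by norm_num) (le_of_lt ht0) (by linarith)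
        _ = (C * ‖x‖) * ‖z‖ := by
            rw [sub_zero, abs_of_pos ht0]
            field_simp
    set Φ : X →L[ℝ] ℝ := LinearMap.mkContinuous φ (C * ‖x‖) hφb with hΦdef
    set y : X := (InnerProductSpace.toDual ℝ X).symm Φ with hydef
    have hy : ∀ z : X, ⟪y, z⟫ = t⁻¹ * ∫ s in (0:ℝ)..t, ⟪x, S s z⟫ := by
      intro z
      rw [hydef, InnerProductSpace.toDual_symm_apply]
      rfl
    refine ⟨y, fun _ => ⟨?_, hy⟩⟩
    -- y ∈ Y
    show Tendsto (fun h => ContinuousLinearMap.adjoint (S h) y) (𝓝[≥] (0:ℝ)) (𝓝 y)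
    have hb2 : ∀ h ∈ Set.Icc (0:ℝ) 1,
        ‖ContinuousLinearMap.adjoint (S h) y - y‖ ≤ t⁻¹ * (2 * C * ‖x‖) * h := by
      intro h hh
      obtain ⟨hh0, hh1⟩ := hh
      refine norm_le_of_inner_le _ (by positivity) ?_
      intro z
      have key : ⟪ContinuousLinearMap.adjoint (S h) y - y, z⟫
          = t⁻¹ * ((∫ s in t..(t+h), ⟪x, S s z⟫) - ∫ s in (0:ℝ)..h, ⟪x, S s z⟫) := by
        rw [inner_sub_left, ContinuousLinearMap.adjoint_inner_left, hy (S h z), hy z]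
        have step1 : (∫ s in (0:ℝ)..t, ⟪x, S s (S h z)⟫)
            = ∫ s in (0:ℝ)..t, ⟪x, S (s + h) z⟫ := by
          apply intervalIntegral.integral_congr
          intro s hs
          rw [Set.uIcc_of_le (le_of_lt ht0)] at hs
          show ⟪x, S s (S h z)⟫ = ⟪x, S (s + h) z⟫
          rw [hSsem s h hs.1 hh0]
          rfl
        have step2 : (∫ s in (0:ℝ)..t, ⟪x, S (s + h) z⟫)
            = ∫ s in h..(t+h), ⟪x, S s z⟫ := by
          have := intervalIntegral.integral_comp_add_right (a := (0:ℝ)) (b := t)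
            (f := fun s => ⟪x, S s z⟫) h
          rw [this, zero_add]
        have e1 : (∫ s in (0:ℝ)..h, ⟪x, S s z⟫) + (∫ s in h..(t+h), ⟪x, S s z⟫)
            = ∫ s in (0:ℝ)..(t+h), ⟪x, S s z⟫ :=
          intervalIntegral.integral_add_adjacent_intervals (hfI z 0 h) (hfI z h (t+h))
        have e2 : (∫ s in (0:ℝ)..t, ⟪x, S s z⟫) + (∫ s in t..(t+h), ⟪x, S s z⟫)
            = ∫ s in (0:ℝ)..(t+h), ⟪x, S s z⟫ :=
          intervalIntegral.integral_add_adjacent_intervals (hfI z 0 t) (hfI z t (t+h))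
        rw [step1, step2, ← mul_sub]
        congr 1
        linarith
      rw [key]
      have b1 : ‖∫ s in t..(t+h), ⟪x, S s z⟫‖ ≤ C * ‖x‖ * ‖z‖ * h := by
        have := hintb z t (t+h) (le_of_lt ht0) (by linarith) (by linarith) (by linarith)
        rwa [add_sub_cancel_left, abs_of_nonneg hh0] at this
      have b2 : ‖∫ s in (0:ℝ)..h, ⟪x, S s z⟫‖ ≤ C * ‖x‖ * ‖z‖ * h := by
        have := hintb z 0 h le_rfl (by norm_num) hh0 (by linarith)
        rwa [sub_zero, abs_of_nonneg hh0] at this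
      rw [Real.norm_eq_abs] at b1 b2
      have habs : |(∫ s in t..(t+h), ⟪x, S s z⟫) - ∫ s in (0:ℝ)..h, ⟪x, S s z⟫|
          ≤ 2 * (C * ‖x‖ * ‖z‖ * h) := by
        calc |(∫ s in t..(t+h), ⟪x, S s z⟫) - ∫ s in (0:ℝ)..h, ⟪x, S s z⟫|
            ≤ |∫ s in t..(t+h), ⟪x, S s z⟫| + |∫ s in (0:ℝ)..h, ⟪x, S s z⟫| := abs_sub _ _
          _ ≤ 2 * (C * ‖x‖ * ‖z‖ * h) := by linarith
      calc t⁻¹ * ((∫ s in t..(t+h), ⟪x, S s z⟫) - ∫ s in (0:ℝ)..h, ⟪x, S s z⟫)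
          ≤ t⁻¹ * |(∫ s in t..(t+h), ⟪x, S s z⟫) - ∫ s in (0:ℝ)..h, ⟪x, S s z⟫| := by
            refine mul_le_mul_of_nonneg_left (le_abs_self _) (le_of_lt (inv_pos.2 ht0))
        _ ≤ t⁻¹ * (2 * (C * ‖x‖ * ‖z‖ * h)) := by
            refine mul_le_mul_of_nonneg_left habs (le_of_lt (inv_pos.2 ht0))
        _ = t⁻¹ * (2 * C * ‖x‖) * h * ‖z‖ := by ring
    have hev : ∀ᶠ h in 𝓝[≥] (0:ℝ),
        ‖ContinuousLinearMap.adjoint (S h) y - y‖ ≤ t⁻¹ * (2 * C * ‖x‖) * h := by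
      filter_upwards [Icc_mem_nhdsGE (zero_lt_one : (0:ℝ) < 1)] with h hh
      exact hb2 h hh
    have htd : Tendsto (fun h : ℝ => t⁻¹ * (2 * C * ‖x‖) * h) (𝓝[≥] (0:ℝ)) (𝓝 0) := by
      have : Tendsto (fun h : ℝ => t⁻¹ * (2 * C * ‖x‖) * h) (𝓝 (0:ℝ))
          (𝓝 (t⁻¹ * (2 * C * ‖x‖) * 0)) := (continuous_const.mul continuous_id).tendsto 0
      rw [mul_zero] at this
      exact this.mono_left nhdsWithin_le_nhds
    have := squeeze_zero_norm' hev htd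
    exact tendsto_sub_nhds_zero_iff.mp this
  choose yfun hyfun using main
  haveI : CompleteSpace Y := hYc.completeSpace_coe
  set z : X := x - (Y.orthogonalProjectionOnto x : X) with hzdef
  have hzo : z ∈ Yᗮ := by
    rw [hzdef, ← Submodule.starProjection_apply]; exact Y.sub_starProjection_mem_orthogonal x
  have hxz : ⟪x, z⟫ = ‖z‖^2 := by
    have h1 : ⟪((Y.orthogonalProjectionOnto x : X)), z⟫ = 0 := by
      have := (Submodule.mem_orthogonal Y z).1 hzo
      exact this _ (Y.orthogonalProjectionOnto x).2
    have h2 : ⟪x, z⟫ = ⟪z, z⟫ + ⟪((Y.orthogonalProjectionOnto x : X)), z⟫ := by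
      rw [← inner_add_left, hzdef, sub_add_cancel]
    rw [h2, h1, real_inner_self_eq_norm_sq, add_zero]
  have hlim : Tendsto (fun t : ℝ => t⁻¹ * ∫ s in (0:ℝ)..t, ⟪x, S s z⟫) (𝓝[>] (0:ℝ))
      (𝓝 ⟪x, z⟫) := by
    have hd : HasDerivAt (fun u : ℝ => ∫ s in (0:ℝ)..u, ⟪x, S s z⟫) (⟪x, S 0 z⟫) 0 :=
      ((hfc z).integral_hasStrictDerivAt 0 0).hasDerivAt
    have hslope := hasDerivAt_iff_tendsto_slope.mp hd
    have hmono : 𝓝[>] (0:ℝ) ≤ 𝓝[≠] (0:ℝ) :=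
      nhdsWithin_mono 0 (fun a (ha : (0:ℝ) < a) => ne_of_gt ha)
    have := hslope.mono_left hmono
    have hS0z : ⟪x, S 0 z⟫ = ⟪x, z⟫ := by rw [hS0]; rfl
    rw [hS0z] at this
    refine this.congr' ?_
    filter_upwards [self_mem_nhdsWithin] with u (hu : (0:ℝ) < u)
    rw [slope_def_field]
    rw [intervalIntegral.integral_same]
    field_simp
    rw [sub_zero, sub_zero, mul_div_cancel_right₀ _ hu.ne']
  have hzero : ∀ᶠ t in 𝓝[>] (0:ℝ),
      t⁻¹ * ∫ s in (0:ℝ)..t, ⟪x, S s z⟫ = 0 := by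
    filter_upwards [Ioc_mem_nhdsGT (zero_lt_one : (0:ℝ) < 1)] with t ht
    obtain ⟨hY, hrep⟩ := hyfun t ht
    rw [← hrep z]
    exact (Submodule.mem_orthogonal Y z).1 hzo _ hY
  have h0 : ⟪x, z⟫ = 0 := by
    have : Tendsto (fun t : ℝ => t⁻¹ * ∫ s in (0:ℝ)..t, ⟪x, S s z⟫) (𝓝[>] (0:ℝ)) (𝓝 0) := by
      rw [tendsto_congr' hzero]
      exact tendsto_const_nhds
    exact tendsto_nhds_unique hlim this
  have hz0 : z = 0 := by
    rw [hxz] at h0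
    exact norm_eq_zero.mp (by nlinarith [norm_nonneg z])
  have hxY : x ∈ Y := by
    have : x = (Y.orthogonalProjectionOnto x : X) := by
      have := sub_eq_zero.mp (hzdef ▸ hz0)
      exact this
    rw [this]
    exact (Y.orthogonalProjectionOnto x).2
  exact hxY

end AuxiliaryLemmas

set_option maxHeartbeats 1000000 in
/-- The operator `Q_∞ x = ∫_0^∞ e^{sA} Q e^{sA*} x ds` satisfies the Lyapunov
equation `Q_∞ A* x + A Q_∞ x = -Q x` on `D(A*)`. -/
theorem stmt3 {X : Type*} [NormedAddCommGroup X] [InnerProductSpace ℝ X]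
    [CompleteSpace X] [TopologicalSpace.SeparableSpace X]
    (S : ℝ → X →L[ℝ] X) (hS0 : S 0 = 1)
    (hSsem : ∀ t s : ℝ, 0 ≤ t → 0 ≤ s → S (t + s) = (S t).comp (S s))
    (hScont : ∀ x : X, Continuous fun t => S t x)
    (DA DAstar : Set X) (A Astar : X → X)
    (hA : ∀ x ∈ DA, HasDerivWithinAt (fun t => S t x) (A x) (Set.Ici 0) 0)
    (hAstar : ∀ x ∈ DAstar,
      HasDerivWithinAt (fun t => ContinuousLinearMap.adjoint (S t) x) (Astar x)
        (Set.Ici 0) 0)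
    (Q : X →L[ℝ] X) (hQsa : IsSelfAdjoint Q) (hQpos : ∀ x : X, 0 ≤ ⟪Q x, x⟫)
    (Qinf : X →L[ℝ] X)
    (hint : ∀ x : X, IntegrableOn
      (fun s => S s (Q (ContinuousLinearMap.adjoint (S s) x))) (Set.Ioi 0))
    (hQinf : ∀ x : X, Qinf x
      = ∫ s in Set.Ioi (0:ℝ), S s (Q (ContinuousLinearMap.adjoint (S s) x)))
    (hmap : ∀ x ∈ DAstar, Qinf x ∈ DA) :
    ∀ x ∈ DAstar, Qinf (Astar x) + A (Qinf x) = -(Q x) := by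
  intro x hx
  obtain ⟨C, hC1, hC⟩ := sg_bound S hScont
  set adj : ℝ → X →L[ℝ] X := fun t => ContinuousLinearMap.adjoint (S t) with hadj
  set hfun : ℝ → X := fun s => S s (Q (adj s x)) with hhfun
  have hadj0 : adj 0 x = x := by
    rw [hadj]
    simp only [hS0]
    rw [show (1 : X →L[ℝ] X) = ContinuousLinearMap.id ℝ X from rfl,
      ContinuousLinearMap.adjoint_id]
    rfl
  have hadjcomp : ∀ s t : ℝ, 0 ≤ s → 0 ≤ t → adj s (adj t x) = adj (t + s) x := by
    intro s t hs ht
    rw [hadj]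
    simp only
    rw [hSsem t s ht hs, ContinuousLinearMap.adjoint_comp]
    rfl
  -- Step B : the fundamental identity
  have hident : ∀ t : ℝ, 0 < t →
      S t (Qinf (adj t x)) = Qinf x - ∫ s in Set.Ioc (0:ℝ) t, hfun s := by
    intro t ht
    have hint1 : IntegrableOn hfun (Set.Ioc 0 t) :=
      (hint x).mono_set Set.Ioc_subset_Ioi_self
    have hint2 : IntegrableOn hfun (Set.Ioi t) :=
      (hint x).mono_set (Set.Ioi_subset_Ioi (le_of_lt ht))
    have key1 : S t (Qinf (adj t x))
        = ∫ s in Set.Ioi (0:ℝ), S t (S s (Q (adj s (adj t x)))) := by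
      rw [hQinf (adj t x)]
      exact (ContinuousLinearMap.integral_comp_comm (S t) (hint (adj t x))).symm
    have key2 : (∫ s in Set.Ioi (0:ℝ), S t (S s (Q (adj s (adj t x)))))
        = ∫ s in Set.Ioi (0:ℝ), hfun (s + t) := by
      apply setIntegral_congr_fun measurableSet_Ioi
      intro s hs
      have hs0 : (0:ℝ) ≤ s := le_of_lt hs
      show S t (S s (Q (adj s (adj t x)))) = hfun (s + t)
      rw [hadjcomp s t hs0 (le_of_lt ht), hhfun]
      simp only
      rw [add_comm s t, hSsem t s (le_of_lt ht) hs0]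
      rfl
    have key3 : (∫ s in Set.Ioi (0:ℝ), hfun (s + t)) = ∫ u in Set.Ioi t, hfun u := by
      rw [← integral_indicator measurableSet_Ioi, ← integral_indicator measurableSet_Ioi]
      have heq : (Set.Ioi (0:ℝ)).indicator (fun s => hfun (s + t))
          = fun s => (Set.Ioi t).indicator hfun (s + t) := by
        funext s
        by_cases hs : s ∈ Set.Ioi (0:ℝ)
        · rw [Set.indicator_of_mem hs, Set.indicator_of_mem (by
            simpa using (by linarith [Set.mem_Ioi.mp hs] : t < s + t))]
        · rw [Set.indicator_of_notMem hs, Set.indicator_of_notMem (by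
            intro hmem
            exact hs (Set.mem_Ioi.mpr (by linarith [Set.mem_Ioi.mp hmem])))]
      rw [heq]
      exact integral_add_right_eq_self ((Set.Ioi t).indicator hfun) t
    have hsplit : Qinf x = (∫ s in Set.Ioc (0:ℝ) t, hfun s) + ∫ s in Set.Ioi t, hfun s := by
      rw [hQinf x, ← Set.Ioc_union_Ioi_eq_Ioi (le_of_lt ht)]
      exact setIntegral_union (Set.Ioc_disjoint_Ioi le_rfl) measurableSet_Ioi hint1 hint2
    rw [key1, key2, key3, hsplit]
    abel
  -- Step C : right continuity of hfun at 0 and the FTC limit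
  have hcont0 : Filter.Tendsto hfun (nhdsWithin 0 (Set.Ici 0)) (nhds (Q x)) := by
    have h1 : Filter.Tendsto (fun s => adj s x - x) (nhdsWithin 0 (Set.Ici 0)) (nhds 0) := by
      have := (adjoint_cont S hS0 hSsem hScont x).sub
        (tendsto_const_nhds (x := x) (f := nhdsWithin 0 (Set.Ici 0)))
      simpa using this
    have h2 : Filter.Tendsto (fun s => ‖Q (adj s x - x)‖) (nhdsWithin 0 (Set.Ici 0))
        (nhds 0) := by
      have := ((Q.continuous.tendsto 0).comp h1).norm
      simpa using this
    have h3 : Filter.Tendsto (fun s => ‖S s (Q x) - Q x‖) (nhdsWithin 0 (Set.Ici 0))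
        (nhds 0) := by
      have h4 : Filter.Tendsto (fun s => S s (Q x)) (nhds (0:ℝ)) (nhds (Q x)) := by
        have := (hScont (Q x)).tendsto 0
        rwa [show S 0 (Q x) = Q x by rw [hS0]; rfl] at this
      have := ((h4.mono_left nhdsWithin_le_nhds).sub
        (tendsto_const_nhds (x := Q x) (f := nhdsWithin 0 (Set.Ici 0)))).norm
      simpa using this
    have hb : ∀ s ∈ Set.Icc (0:ℝ) 2,
        ‖hfun s - Q x‖ ≤ C * ‖Q (adj s x - x)‖ + ‖S s (Q x) - Q x‖ := by
      intro s hs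
      have hdecomp : hfun s - Q x = S s (Q (adj s x - x)) + (S s (Q x) - Q x) := by
        rw [hhfun]
        simp only [map_sub]
        abel
      rw [hdecomp]
      refine le_trans (norm_add_le _ _) ?_
      have : ‖S s (Q (adj s x - x))‖ ≤ C * ‖Q (adj s x - x)‖ := by
        calc ‖S s (Q (adj s x - x))‖ ≤ ‖S s‖ * ‖Q (adj s x - x)‖ :=
            ContinuousLinearMap.le_opNorm _ _
          _ ≤ C * ‖Q (adj s x - x)‖ :=
            mul_le_mul_of_nonneg_right (hC s hs) (norm_nonneg _)
      linarith
    have hev : ∀ᶠ s in nhdsWithin 0 (Set.Ici 0),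
        ‖hfun s - Q x‖ ≤ C * ‖Q (adj s x - x)‖ + ‖S s (Q x) - Q x‖ := by
      filter_upwards [Icc_mem_nhdsGE (two_pos : (0:ℝ) < 2)] with s hs
      exact hb s hs
    have hlim0 : Filter.Tendsto (fun s => C * ‖Q (adj s x - x)‖ + ‖S s (Q x) - Q x‖)
        (nhdsWithin 0 (Set.Ici 0)) (nhds 0) := by
      have := (h2.const_mul C).add h3
      simpa using this
    have := squeeze_zero_norm' hev hlim0
    exact tendsto_sub_nhds_zero_iff.mp this
  have hFTC : Filter.Tendsto (fun t : ℝ => t⁻¹ • ∫ s in Set.Ioc (0:ℝ) t, hfun s)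
      (nhdsWithin 0 (Set.Ioi 0)) (nhds (Q x)) := by
    rw [Metric.tendsto_nhdsWithin_nhds]
    intro ε hε
    rw [Metric.tendsto_nhdsWithin_nhds] at hcont0
    obtain ⟨δ, hδ0, hδ⟩ := hcont0 (ε/2) (by positivity)
    refine ⟨δ, hδ0, ?_⟩
    intro t ht htδ
    have ht0 : (0:ℝ) < t := ht
    have hbound : ∀ s ∈ Set.Ioc (0:ℝ) t, ‖hfun s - Q x‖ ≤ ε/2 := by
      intro s hs
      have hsd : dist s (0:ℝ) < δ := by
        rw [Real.dist_eq, sub_zero, abs_of_pos hs.1]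
        rw [Real.dist_eq, sub_zero, abs_of_pos ht0] at htδ
        linarith [hs.2]
      have := hδ (le_of_lt hs.1) hsd
      rw [dist_eq_norm] at this
      exact le_of_lt this
    have hvol : volume (Set.Ioc (0:ℝ) t) < ⊤ := by
      rw [Real.volume_Ioc]
      exact ENNReal.ofReal_lt_top
    have hint1 : IntegrableOn hfun (Set.Ioc 0 t) :=
      (hint x).mono_set Set.Ioc_subset_Ioi_self
    have hconst : IntegrableOn (fun _ : ℝ => Q x) (Set.Ioc 0 t) :=
      integrableOn_const hvol.ne
    have hsub : (∫ s in Set.Ioc (0:ℝ) t, (hfun s - Q x))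
        = (∫ s in Set.Ioc (0:ℝ) t, hfun s) - t • Q x := by
      rw [integral_sub hint1 hconst, setIntegral_const]
      congr 1
      rw [measureReal_def, Real.volume_Ioc, sub_zero, ENNReal.toReal_ofReal (le_of_lt ht0)]
    have hnorm : ‖(∫ s in Set.Ioc (0:ℝ) t, hfun s) - t • Q x‖ ≤ ε/2 * t := by
      rw [← hsub]
      have := norm_setIntegral_le_of_norm_le_const hvol hbound
      calc ‖∫ s in Set.Ioc (0:ℝ) t, (hfun s - Q x)‖
          ≤ ε/2 * (volume (Set.Ioc (0:ℝ) t)).toReal := this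
        _ = ε/2 * t := by
            rw [Real.volume_Ioc, sub_zero, ENNReal.toReal_ofReal (le_of_lt ht0)]
    rw [dist_eq_norm]
    have heq : t⁻¹ • (∫ s in Set.Ioc (0:ℝ) t, hfun s) - Q x
        = t⁻¹ • ((∫ s in Set.Ioc (0:ℝ) t, hfun s) - t • Q x) := by
      rw [smul_sub, smul_smul, inv_mul_cancel₀ (ne_of_gt ht0), one_smul]
    rw [heq, norm_smul, Real.norm_eq_abs, abs_of_pos (inv_pos.2 ht0)]
    calc t⁻¹ * ‖(∫ s in Set.Ioc (0:ℝ) t, hfun s) - t • Q x‖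
        ≤ t⁻¹ * (ε/2 * t) := mul_le_mul_of_nonneg_left hnorm (le_of_lt (inv_pos.2 ht0))
      _ = ε/2 := by field_simp
      _ < ε := by linarith
  -- Step D : derivative of F t = S t (Qinf (adj t x))
  set w : X := Qinf (Astar x) with hw
  have hgd : HasDerivWithinAt (fun t => Qinf (adj t x)) w (Set.Ici 0) 0 :=
    Qinf.hasFDerivAt.comp_hasDerivWithinAt 0 (hAstar x hx)
  have hgs : Filter.Tendsto (fun t : ℝ => t⁻¹ • (Qinf (adj t x) - Qinf x))
      (nhdsWithin 0 (Set.Ioi 0)) (nhds w) := by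
    have := hasDerivWithinAt_iff_tendsto_slope.mp hgd
    rw [Set.Ici_sdiff_left] at this
    refine this.congr ?_
    intro t
    rw [slope_def_module, sub_zero, hadj0]
  have hF2s : Filter.Tendsto (fun t : ℝ => t⁻¹ • (S t (Qinf x) - Qinf x))
      (nhdsWithin 0 (Set.Ioi 0)) (nhds (A (Qinf x))) := by
    have := hasDerivWithinAt_iff_tendsto_slope.mp (hA _ (hmap x hx))
    rw [Set.Ici_sdiff_left] at this
    refine this.congr ?_
    intro t
    rw [slope_def_module, sub_zero, show S 0 (Qinf x) = Qinf x by rw [hS0]; rfl]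
  -- S t applied to the difference quotient
  have hSd : Filter.Tendsto (fun t : ℝ => S t (t⁻¹ • (Qinf (adj t x) - Qinf x)))
      (nhdsWithin 0 (Set.Ioi 0)) (nhds w) := by
    set d : ℝ → X := fun t => t⁻¹ • (Qinf (adj t x) - Qinf x) with hd
    have hb : ∀ t ∈ Set.Icc (0:ℝ) 2, ‖S t (d t) - w‖ ≤ C * ‖d t - w‖ + ‖S t w - w‖ := by
      intro t htm
      have hdecomp : S t (d t) - w = S t (d t - w) + (S t w - w) := by
        rw [map_sub]; abel
      rw [hdecomp]
      refine le_trans (norm_add_le _ _) ?_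
      have : ‖S t (d t - w)‖ ≤ C * ‖d t - w‖ := by
        calc ‖S t (d t - w)‖ ≤ ‖S t‖ * ‖d t - w‖ := ContinuousLinearMap.le_opNorm _ _
          _ ≤ C * ‖d t - w‖ := mul_le_mul_of_nonneg_right (hC t htm) (norm_nonneg _)
      linarith
    have hev : ∀ᶠ t in nhdsWithin 0 (Set.Ioi 0),
        ‖S t (d t) - w‖ ≤ C * ‖d t - w‖ + ‖S t w - w‖ := by
      filter_upwards [Ioc_mem_nhdsGT (two_pos : (0:ℝ) < 2)] with t htm
      exact hb t ⟨le_of_lt htm.1, htm.2⟩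
    have hlim1 : Filter.Tendsto (fun t => C * ‖d t - w‖ + ‖S t w - w‖)
        (nhdsWithin 0 (Set.Ioi 0)) (nhds 0) := by
      have e1 : Filter.Tendsto (fun t => ‖d t - w‖) (nhdsWithin 0 (Set.Ioi 0)) (nhds 0) := by
        have := (hgs.sub (tendsto_const_nhds (x := w))).norm
        simpa using this
      have e2 : Filter.Tendsto (fun t : ℝ => ‖S t w - w‖) (nhdsWithin 0 (Set.Ioi 0))
          (nhds 0) := by
        have h4 : Filter.Tendsto (fun t : ℝ => S t w) (nhds (0:ℝ)) (nhds w) := by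
          have := (hScont w).tendsto 0
          rwa [show S 0 w = w by rw [hS0]; rfl] at this
        have := ((h4.mono_left nhdsWithin_le_nhds).sub
          (tendsto_const_nhds (x := w) (f := nhdsWithin 0 (Set.Ioi 0)))).norm
        simpa using this
      have := (e1.const_mul C).add e2
      simpa using this
    have := squeeze_zero_norm' hev hlim1
    exact tendsto_sub_nhds_zero_iff.mp this
  -- the two expressions for the slope of F
  have hslope1 : Filter.Tendsto
      (fun t : ℝ => t⁻¹ • (S t (Qinf (adj t x)) - Qinf x))
      (nhdsWithin 0 (Set.Ioi 0)) (nhds (w + A (Qinf x))) := by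
    have heq : ∀ t : ℝ, t⁻¹ • (S t (Qinf (adj t x)) - Qinf x)
        = S t (t⁻¹ • (Qinf (adj t x) - Qinf x)) + t⁻¹ • (S t (Qinf x) - Qinf x) := by
      intro t
      rw [ContinuousLinearMap.map_smul, map_sub, ← smul_add]
      congr 1
      abel
    have := hSd.add hF2s
    refine this.congr ?_
    intro t
    exact (heq t).symm
  have hslope2 : Filter.Tendsto
      (fun t : ℝ => t⁻¹ • (S t (Qinf (adj t x)) - Qinf x))
      (nhdsWithin 0 (Set.Ioi 0)) (nhds (-(Q x))) := by
    have heq : ∀ᶠ t in nhdsWithin 0 (Set.Ioi 0),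
        t⁻¹ • (S t (Qinf (adj t x)) - Qinf x)
        = -(t⁻¹ • ∫ s in Set.Ioc (0:ℝ) t, hfun s) := by
      filter_upwards [self_mem_nhdsWithin] with t (ht : (0:ℝ) < t)
      rw [hident t ht]
      rw [show Qinf x - (∫ s in Set.Ioc (0:ℝ) t, hfun s) - Qinf x
        = -(∫ s in Set.Ioc (0:ℝ) t, hfun s) by abel, smul_neg]
    rw [Filter.tendsto_congr' heq]
    exact hFTC.neg
  exact tendsto_nhds_unique hslope1 hslope2
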